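/- (Cumulative regret of the best constant action, noiseless case) Let k ≥ 1, γ_0 ≥ 0, and γ_1, ..., γ_k ≥ 0 with Γ := Σ_{i=1}^k γ_i < 1. Define x_t = γ_0 + Σ_{i=1}^k γ_i x_{t-i} with x_s = 0 for s ≤ 0, and let x* = γ_0/(1 − Γ) be the steady-state reward. Then 0 ≤ x* − x_t ≤ γ_0 Γ^{⌈t/k⌉}/(1 − Γ) for every t ≥ 1, and the series Σ_{t=1}^∞ (x* − x_t) converges with Σ_{t=1}^∞ (x* − x_t) ≤ γ_0 k / (1 − Γ)². -/

import Mathlib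

/-!
STATEMENT 18 (Cumulative regret of the best constant action, noiseless case): with
`γ_0 ≥ 0`, `γ_i ≥ 0`, `Γ = ∑_{i=1}^k γ_i < 1`, zero initial conditions,
`x_t = γ_0 + ∑_{i=1}^k γ_i x_{t-i}`, and steady state `x* = γ_0/(1 − Γ)`:
`0 ≤ x* − x_t ≤ γ_0 Γ^{⌈t/k⌉}/(1 − Γ)` for every `t ≥ 1`, and the series
`∑_{t=1}^∞ (x* − x_t)` converges with sum at most `γ_0 k/(1 − Γ)²`.
(The index `t ≥ 1` of the series is encoded as `t + 1` with `t : ℕ`.)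
-/
theorem constant_action_cumulative_regret
    (k : ℕ) (hk : 1 ≤ k)
    (γ0 : ℝ) (hγ0 : 0 ≤ γ0)
    (γ : ℕ → ℝ) (hγ : ∀ i : ℕ, 1 ≤ i → i ≤ k → 0 ≤ γ i)
    (Γ : ℝ) (hΓdef : Γ = ∑ i ∈ Finset.Icc 1 k, γ i) (hΓ : Γ < 1)
    (x : ℤ → ℝ) (hx0 : ∀ s : ℤ, s ≤ 0 → x s = 0)
    (hrec : ∀ t : ℤ, 1 ≤ t →
      x t = γ0 + ∑ i ∈ Finset.Icc 1 k, γ i * x (t - i))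
    (xstar : ℝ) (hxstar : xstar = γ0 / (1 - Γ)) :
    (∀ t : ℤ, 1 ≤ t →
      0 ≤ xstar - x t ∧
        xstar - x t ≤ γ0 * Γ ^ (⌈((t : ℚ)) / (k : ℚ)⌉).toNat / (1 - Γ)) ∧
    Summable (fun t : ℕ => xstar - x ((t : ℤ) + 1)) ∧
    ∑' t : ℕ, (xstar - x ((t : ℤ) + 1)) ≤ γ0 * k / (1 - Γ) ^ 2 := by
  have hkQ : (0 : ℚ) < (k : ℚ) := by exact_mod_cast hk
  have hΓ0 : 0 ≤ Γ := by
    rw [hΓdef]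
    exact Finset.sum_nonneg fun i hi =>
      hγ i (Finset.mem_Icc.mp hi).1 (Finset.mem_Icc.mp hi).2
  have h1Γ : 0 < 1 - Γ := by linarith
  have hxs0 : 0 ≤ xstar := by rw [hxstar]; exact div_nonneg hγ0 h1Γ.le
  have hxseq : xstar = γ0 + Γ * xstar := by
    rw [hxstar]; field_simp; ring
  -- deficit recursion
  have hdrec : ∀ t : ℤ, 1 ≤ t →
      xstar - x t = ∑ i ∈ Finset.Icc 1 k, γ i * (xstar - x (t - i)) := by
    intro t ht
    have hsum : ∑ i ∈ Finset.Icc 1 k, γ i * (xstar - x (t - i))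
        = (∑ i ∈ Finset.Icc 1 k, γ i) * xstar
          - ∑ i ∈ Finset.Icc 1 k, γ i * x (t - i) := by
      rw [Finset.sum_mul, ← Finset.sum_sub_distrib]
      exact Finset.sum_congr rfl fun i _ => by ring
    rw [hsum, ← hΓdef, hrec t ht]
    linarith [hxseq]
  -- pointwise bounds with bound xstar * Γ ^ N
  have key : ∀ n : ℕ, ∀ t : ℤ, t ≤ n →
      0 ≤ xstar - x t ∧
        xstar - x t ≤ xstar * Γ ^ (⌈((t : ℚ)) / (k : ℚ)⌉).toNat := by
    intro n
    induction n with
    | zero =>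
      intro t ht
      have ht0 : t ≤ 0 := by exact_mod_cast ht
      have hceil : (⌈((t : ℚ)) / (k : ℚ)⌉).toNat = 0 := by
        have : ⌈((t : ℚ)) / (k : ℚ)⌉ ≤ 0 := by
          apply Int.ceil_le.mpr
          push_cast
          apply div_nonpos_of_nonpos_of_nonneg
          · exact_mod_cast ht0
          · exact hkQ.le
        omega
      rw [hx0 t ht0, hceil]
      simp [hxs0]
    | succ n ih =>
      intro t ht
      rcases le_or_gt t 0 with h0 | h0
      · have hceil : (⌈((t : ℚ)) / (k : ℚ)⌉).toNat = 0 := by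
          have : ⌈((t : ℚ)) / (k : ℚ)⌉ ≤ 0 := by
            apply Int.ceil_le.mpr
            push_cast
            apply div_nonpos_of_nonpos_of_nonneg
            · exact_mod_cast h0
            · exact hkQ.le
          omega
        rw [hx0 t h0, hceil]
        simp [hxs0]
      · have ht1 : 1 ≤ t := h0
        set N : ℕ := (⌈((t : ℚ)) / (k : ℚ)⌉).toNat with hN
        have hN1 : 1 ≤ N := by
          have : 0 < ⌈((t : ℚ)) / (k : ℚ)⌉ :=
            Int.ceil_pos.mpr (div_pos (by exact_mod_cast h0) hkQ)
          omega
        have hib : ∀ i ∈ Finset.Icc 1 k,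
            0 ≤ xstar - x (t - i) ∧
              xstar - x (t - i) ≤ xstar * Γ ^ (N - 1) := by
          intro i hi
          obtain ⟨hi1, hik⟩ := Finset.mem_Icc.mp hi
          have hle : t - (i : ℤ) ≤ n := by
            have : t ≤ (n : ℤ) + 1 := by exact_mod_cast ht
            omega
          obtain ⟨hnn, hub⟩ := ih (t - i) hle
          refine ⟨hnn, hub.trans ?_⟩
          have hceil : (⌈(((t - (i : ℤ)) : ℤ) : ℚ) / (k : ℚ)⌉) ≥
              ⌈((t : ℚ)) / (k : ℚ)⌉ - 1 := by
            have hmono : ((t : ℚ)) / (k : ℚ) - 1 ≤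
                (((t - (i : ℤ)) : ℤ) : ℚ) / (k : ℚ) := by
              push_cast
              rw [sub_div]
              have hik' : (i : ℚ) / (k : ℚ) ≤ 1 :=
                (div_le_one hkQ).mpr (by exact_mod_cast hik)
              linarith
            calc ⌈((t : ℚ)) / (k : ℚ)⌉ - 1 = ⌈((t : ℚ)) / (k : ℚ) - 1⌉ := by
                  rw [Int.ceil_sub_one]
              _ ≤ _ := Int.ceil_mono hmono
          have hexp : N - 1 ≤ (⌈(((t - (i : ℤ)) : ℤ) : ℚ) / (k : ℚ)⌉).toNat := by
            omega
          have := pow_le_pow_of_le_one hΓ0 hΓ.le hexp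
          exact mul_le_mul_of_nonneg_left this hxs0
        rw [hdrec t ht1]
        constructor
        · apply Finset.sum_nonneg
          intro i hi
          obtain ⟨hi1, hik⟩ := Finset.mem_Icc.mp hi
          exact mul_nonneg (hγ i hi1 hik) (hib i hi).1
        · calc ∑ i ∈ Finset.Icc 1 k, γ i * (xstar - x (t - i))
              ≤ ∑ i ∈ Finset.Icc 1 k, γ i * (xstar * Γ ^ (N - 1)) := by
                apply Finset.sum_le_sum
                intro i hi
                obtain ⟨hi1, hik⟩ := Finset.mem_Icc.mp hi
                exact mul_le_mul_of_nonneg_left (hib i hi).2 (hγ i hi1 hik)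
            _ = Γ * (xstar * Γ ^ (N - 1)) := by rw [← Finset.sum_mul, ← hΓdef]
            _ = xstar * Γ ^ N := by
                have hm : N - 1 + 1 = N := by omega
                calc Γ * (xstar * Γ ^ (N - 1)) = xstar * Γ ^ (N - 1 + 1) := by
                      rw [pow_succ]; ring
                  _ = xstar * Γ ^ N := by rw [hm]
  have hpt : ∀ t : ℤ, 1 ≤ t →
      0 ≤ xstar - x t ∧
        xstar - x t ≤ γ0 * Γ ^ (⌈((t : ℚ)) / (k : ℚ)⌉).toNat / (1 - Γ) := by
    intro t ht
    obtain ⟨h1, h2⟩ := key t.toNat t (Int.self_le_toNat t)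
    refine ⟨h1, h2.trans_eq ?_⟩
    rw [hxstar, div_mul_eq_mul_div]
  refine ⟨hpt, ?_⟩
  set d : ℕ → ℝ := fun t => xstar - x ((t : ℤ) + 1) with hd
  have hd0 : ∀ t : ℕ, 0 ≤ d t := by
    intro t
    exact (hpt ((t : ℤ) + 1) (by omega)).1
  have hS : ∀ n : ℕ, ∑ t ∈ Finset.range n, d t ≤ γ0 * k / (1 - Γ) ^ 2 := by
    intro n
    set S : ℝ := ∑ t ∈ Finset.range n, d t with hSdef
    have hS0 : 0 ≤ S := Finset.sum_nonneg fun t _ => hd0 t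
    have hinner : ∀ i ∈ Finset.Icc 1 k,
        ∑ t ∈ Finset.range n, (xstar - x ((t : ℤ) + 1 - i)) ≤ (k : ℝ) * xstar + S := by
      intro i hi
      obtain ⟨hi1, hik⟩ := Finset.mem_Icc.mp hi
      rcases le_or_gt n i with h | h
      · -- all indices give xstar
        have : ∑ t ∈ Finset.range n, (xstar - x ((t : ℤ) + 1 - i)) =
            (n : ℝ) * xstar := by
          rw [Finset.sum_congr rfl (fun t htm => ?_), Finset.sum_const,
            Finset.card_range, nsmul_eq_mul]
          have htn : t < n := Finset.mem_range.mp htm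
          rw [hx0 _ (by omega : (t : ℤ) + 1 - i ≤ 0), sub_zero]
        rw [this]
        have : (n : ℝ) * xstar ≤ (k : ℝ) * xstar := by
          apply mul_le_mul_of_nonneg_right _ hxs0
          exact_mod_cast h.trans hik
        linarith
      · rw [← Finset.sum_range_add_sum_Ico _ h.le]
        have h1 : ∑ t ∈ Finset.range i, (xstar - x ((t : ℤ) + 1 - i)) =
            (i : ℝ) * xstar := by
          rw [Finset.sum_congr rfl (fun t htm => ?_), Finset.sum_const,
            Finset.card_range, nsmul_eq_mul]
          have hti : t < i := Finset.mem_range.mp htm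
          rw [hx0 _ (by omega : (t : ℤ) + 1 - i ≤ 0), sub_zero]
        have h2 : ∑ t ∈ Finset.Ico i n, (xstar - x ((t : ℤ) + 1 - i)) ≤ S := by
          rw [Finset.sum_Ico_eq_sum_range]
          have heq : ∀ t ∈ Finset.range (n - i),
              (xstar - x (((i + t : ℕ) : ℤ) + 1 - i)) = d t := by
            intro t _
            have : ((i + t : ℕ) : ℤ) + 1 - i = (t : ℤ) + 1 := by push_cast; ring
            rw [this]
          rw [Finset.sum_congr rfl heq]
          apply Finset.sum_le_sum_of_subset_of_nonneg
          · exact Finset.range_subset_range.mpr (by omega)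
          · intro t _ _; exact hd0 t
        have h3 : (i : ℝ) * xstar ≤ (k : ℝ) * xstar :=
          mul_le_mul_of_nonneg_right (by exact_mod_cast hik) hxs0
        linarith
    have hstep : S ≤ Γ * ((k : ℝ) * xstar + S) := by
      have : S = ∑ i ∈ Finset.Icc 1 k,
          γ i * ∑ t ∈ Finset.range n, (xstar - x ((t : ℤ) + 1 - i)) := by
        rw [hSdef]
        have : ∀ t ∈ Finset.range n,
            d t = ∑ i ∈ Finset.Icc 1 k, γ i * (xstar - x ((t : ℤ) + 1 - i)) := by
          intro t _
          exact hdrec ((t : ℤ) + 1) (by omega)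
        rw [Finset.sum_congr rfl this, Finset.sum_comm]
        exact Finset.sum_congr rfl fun i _ => (Finset.mul_sum _ _ _).symm
      calc S = ∑ i ∈ Finset.Icc 1 k,
            γ i * ∑ t ∈ Finset.range n, (xstar - x ((t : ℤ) + 1 - i)) := this
        _ ≤ ∑ i ∈ Finset.Icc 1 k, γ i * ((k : ℝ) * xstar + S) := by
            apply Finset.sum_le_sum
            intro i hi
            obtain ⟨hi1, hik⟩ := Finset.mem_Icc.mp hi
            exact mul_le_mul_of_nonneg_left (hinner i hi) (hγ i hi1 hik)
        _ = Γ * ((k : ℝ) * xstar + S) := by rw [← Finset.sum_mul, ← hΓdef]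
    have hk0R : (0 : ℝ) ≤ (k : ℝ) := by positivity
    have h2 : S * (1 - Γ) ≤ (k : ℝ) * xstar := by nlinarith [mul_nonneg hk0R hxs0]
    have h3 : S ≤ (k : ℝ) * xstar / (1 - Γ) := (le_div_iff₀ h1Γ).mpr h2
    calc S ≤ (k : ℝ) * xstar / (1 - Γ) := h3
      _ = γ0 * k / (1 - Γ) ^ 2 := by rw [hxstar]; field_simp
  exact ⟨summable_of_sum_range_le hd0 hS, Summable.tsum_le_of_sum_range_le
    (summable_of_sum_range_le hd0 hS) hS⟩
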